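/- Let r ≥ 1 and let c : X×X → ℝ_+ be a continuous semimetric of negative type on the compact Polish space X. Then for all probability measures μ, ν on X, DLOT_{r,c}(μ,ν) ≥ 0. -/

import Mathlib

open MeasureTheory Filter
open scoped ENNReal NNReal BigOperators

noncomputable section

/-- `π` is a coupling of `μ` and `ν`. -/
def IsCoupling {X Y : Type*} [MeasurableSpace X] [MeasurableSpace Y]
    (μ : Measure X) (ν : Measure Y) (π : Measure (X × Y)) : Prop :=
  IsProbabilityMeasure π ∧ π.map Prod.fst = μ ∧ π.map Prod.snd = ν

/-- `π` is a coupling of `μ` and `ν` of nonnegative rank at most `r`, i.e. it can be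
written as `π = Σ_{i=1}^r λ_i μ_i ⊗ ν_i` with strictly positive weights `λ ∈ Δ_r^*`. -/
def IsLowRankCoupling {X Y : Type*} [MeasurableSpace X] [MeasurableSpace Y]
    (r : ℕ) (μ : Measure X) (ν : Measure Y) (π : Measure (X × Y)) : Prop :=
  IsCoupling μ ν π ∧
  ∃ (lam : Fin r → ℝ≥0) (μs : Fin r → Measure X) (νs : Fin r → Measure Y),
    (∀ i, 0 < lam i) ∧ (∑ i, lam i) = 1 ∧
    (∀ i, IsProbabilityMeasure (μs i)) ∧ (∀ i, IsProbabilityMeasure (νs i)) ∧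
    π = ∑ i, lam i • (μs i).prod (νs i)

/-- Optimal transport cost `OT_c(μ,ν)`. -/
def OT {X Y : Type*} [MeasurableSpace X] [MeasurableSpace Y]
    (c : X → Y → ℝ) (μ : Measure X) (ν : Measure Y) : ℝ :=
  sInf {t | ∃ π, IsCoupling μ ν π ∧ t = ∫ p, c p.1 p.2 ∂π}

/-- Low-rank optimal transport cost `LOT_{r,c}(μ,ν)`. -/
def LOT {X Y : Type*} [MeasurableSpace X] [MeasurableSpace Y]
    (r : ℕ) (c : X → Y → ℝ) (μ : Measure X) (ν : Measure Y) : ℝ :=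
  sInf {t | ∃ π, IsLowRankCoupling r μ ν π ∧ t = ∫ p, c p.1 p.2 ∂π}

/-- Debiased low-rank optimal transport `DLOT_{r,c}(μ,ν)`. -/
def DLOT {X : Type*} [MeasurableSpace X]
    (r : ℕ) (c : X → X → ℝ) (μ ν : Measure X) : ℝ :=
  LOT r c μ ν - (LOT r c μ μ + LOT r c ν ν) / 2

/-- The `k`-th dyadic entropy number of a subset `W` of a metric space:
the infimum of radii `ε` such that `W` is covered by `2^k` closed balls of radius `ε`. -/
def entropyNum {Z : Type*} [MetricSpace Z] (W : Set Z) (k : ℕ) : ℝ :=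
  sInf {ε : ℝ | 0 < ε ∧ ∃ z : Fin (2 ^ k) → Z, W ⊆ ⋃ i, Metric.closedBall (z i) ε}

/-- `c` is a semimetric of negative type: symmetric, vanishing exactly on the diagonal,
and `Σ_{i,j} α_i α_j c(x_i,x_j) ≤ 0` whenever `Σ_i α_i = 0`. -/
def IsSemimetricNegType {X : Type*} (c : X → X → ℝ) : Prop :=
  (∀ x y, c x y = c y x) ∧ (∀ x y, c x y = 0 ↔ x = y) ∧
  ∀ (n : ℕ), 2 ≤ n → ∀ (x : Fin n → X) (α : Fin n → ℝ), (∑ i, α i) = 0 →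
    ∑ i, ∑ j, α i * α j * c (x i) (x j) ≤ 0

/-- `c` is a semimetric of strong negative type: of negative type, and for all probability
measures `μ ≠ ν`, `∫ c d[μ−ν]⊗[μ−ν] < 0`, i.e.
`∫c dμ⊗μ + ∫c dν⊗ν − 2∫c dμ⊗ν < 0`. -/
def IsSemimetricStrongNegType {X : Type*} [MeasurableSpace X] (c : X → X → ℝ) : Prop :=
  IsSemimetricNegType c ∧
  ∀ μ ν : Measure X, IsProbabilityMeasure μ → IsProbabilityMeasure ν → μ ≠ ν →
    (∫ p, c p.1 p.2 ∂(μ.prod μ)) + (∫ p, c p.1 p.2 ∂(ν.prod ν))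
      - 2 * ∫ p, c p.1 p.2 ∂(μ.prod ν) < 0

section DlotKey
open Set
variable {X : Type*} [MetricSpace X] [CompactSpace X] [Nonempty X]
  [MeasurableSpace X] [BorelSpace X]

lemma cost_integrable (c : X → X → ℝ) (hc : Continuous fun p : X × X => c p.1 p.2)
    (m : Measure (X × X)) [IsFiniteMeasure m] :
    Integrable (fun p : X × X => c p.1 p.2) m := by
  obtain ⟨C, hC⟩ := isCompact_univ.exists_bound_of_continuousOn hc.continuousOn
  exact Integrable.mono' (integrable_const C) hc.aestronglyMeasurable
    (ae_of_all _ fun p => hC p trivial)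

lemma negtype_int (c : X → X → ℝ) (hc_cont : Continuous fun p : X × X => c p.1 p.2)
    (hc_sym : ∀ x y, c x y = c y x)
    (hc_neg : ∀ (n : ℕ), 2 ≤ n → ∀ (x : Fin n → X) (α : Fin n → ℝ), (∑ i, α i) = 0 →
      ∑ i, ∑ j, α i * α j * c (x i) (x j) ≤ 0)
    (α β : Measure X) [IsProbabilityMeasure α] [IsProbabilityMeasure β] :
    (∫ p, c p.1 p.2 ∂(α.prod α)) + (∫ p, c p.1 p.2 ∂(β.prod β))
      ≤ 2 * ∫ p, c p.1 p.2 ∂(α.prod β) := by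
  have key : ∀ ε : ℝ, 0 < ε →
      (∫ p, c p.1 p.2 ∂(α.prod α)) + (∫ p, c p.1 p.2 ∂(β.prod β))
        ≤ 2 * (∫ p, c p.1 p.2 ∂(α.prod β)) + ε := by
    intro ε hε
    -- uniform continuity
    have huc := CompactSpace.uniformContinuous_of_continuous hc_cont
    rw [Metric.uniformContinuous_iff] at huc
    obtain ⟨δ, hδ, hδc⟩ := huc (ε / 4) (by linarith)
    -- finite cover by balls of radius δ
    obtain ⟨t, -, htfin, htcov⟩ := finite_cover_balls_of_compact (isCompact_univ : IsCompact (Set.univ : Set X)) hδ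
    classical
    set s : Finset X := htfin.toFinset with hs
    set n : ℕ := s.card + 2 with hn
    set u : Fin n → X := fun i =>
      if h : (i : ℕ) < s.card then (s.equivFin.symm ⟨i, h⟩ : X) else Classical.arbitrary X
      with hu
    have hcov : ∀ x : X, ∃ i : Fin n, dist x (u i) < δ := by
      intro x
      have hx := htcov (mem_univ x)
      simp only [mem_iUnion, Metric.mem_ball] at hx
      obtain ⟨y, hyt, hxy⟩ := hx
      have hy : y ∈ s := by simpa [hs] using hyt
      set j : Fin s.card := s.equivFin ⟨y, hy⟩ with hj
      refine ⟨⟨(j : ℕ), by omega⟩, ?_⟩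
      have hlt : ((j : ℕ) : ℕ) < s.card := j.isLt
      simp only [hu, hlt, dif_pos]
      have : (⟨(j : ℕ), hlt⟩ : Fin s.card) = j := by ext; rfl
      rw [this, hj, Equiv.symm_apply_apply]
      exact hxy
    set filt : X → Finset (Fin n) := fun x => Finset.univ.filter (fun i => dist x (u i) < δ)
      with hfilt
    have hne : ∀ x, (filt x).Nonempty := by
      intro x
      obtain ⟨i, hi⟩ := hcov x
      exact ⟨i, by simp [hfilt, hi]⟩
    set g : X → Fin n := fun x => (filt x).min' (hne x) with hgdef
    have hgmem : ∀ x, dist x (u (g x)) < δ := by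
      intro x
      have := (filt x).min'_mem (hne x)
      simpa [hfilt] using this
    have hgeq : ∀ x k, g x = k ↔ (dist x (u k) < δ ∧ ∀ j, j < k → ¬ dist x (u j) < δ) := by
      intro x k
      constructor
      · rintro rfl
        refine ⟨hgmem x, fun j hj hdj => ?_⟩
        have hjm : j ∈ filt x := by simp [hfilt, hdj]
        have := (filt x).min'_le j hjm
        exact absurd this (not_le.mpr hj)
      · rintro ⟨h1, h2⟩
        have hkm : k ∈ filt x := by simp [hfilt, h1]
        have hle : g x ≤ k := (filt x).min'_le k hkm
        rcases lt_or_eq_of_le hle with hlt | heq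
        · exact absurd (hgmem x) (h2 _ hlt)
        · exact heq
    have hg : Measurable g := by
      apply measurable_to_countable'
      intro k
      have : g ⁻¹' {k}
          = {x | dist x (u k) < δ} ∩ ⋂ j, ⋂ (_ : j < k), {x | dist x (u j) < δ}ᶜ := by
        ext x
        simp only [mem_preimage, mem_singleton_iff, hgeq, mem_inter_iff, mem_setOf_eq,
          mem_iInter, mem_compl_iff]
      rw [this]
      refine MeasurableSet.inter ?_ (MeasurableSet.iInter fun j => MeasurableSet.iInter
        fun _ => (MeasurableSet.compl ?_))
      · exact (isOpen_lt (continuous_id.dist continuous_const) continuous_const).measurableSet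
      · exact (isOpen_lt (continuous_id.dist continuous_const) continuous_const).measurableSet
    set f : X → X := fun x => u (g x) with hfdef
    have hf : Measurable f := (measurable_of_countable u).comp hg
    have hpt : ∀ p : X × X, ‖c p.1 p.2 - c (f p.1) (f p.2)‖ ≤ ε / 4 := by
      intro p
      have hd : dist (p.1, p.2) (f p.1, f p.2) < δ := by
        rw [Prod.dist_eq]
        exact max_lt (hgmem p.1) (hgmem p.2)
      have := hδc hd
      rw [Real.dist_eq] at this
      simpa [Real.norm_eq_abs] using this.le
    -- integral comparison
    have hint2 : ∀ (m : Measure (X × X)), IsProbabilityMeasure m →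
        |(∫ p, c p.1 p.2 ∂m) - ∫ p, c (f p.1) (f p.2) ∂m| ≤ ε / 4 := by
      intro m hm
      have h1 := cost_integrable c hc_cont m
      obtain ⟨C, hC⟩ := isCompact_univ.exists_bound_of_continuousOn hc_cont.continuousOn
      have hmeas : Measurable fun p : X × X => c (f p.1) (f p.2) :=
        hc_cont.measurable.comp ((hf.comp measurable_fst).prodMk (hf.comp measurable_snd))
      have h2 : Integrable (fun p : X × X => c (f p.1) (f p.2)) m :=
        Integrable.mono' (integrable_const C) hmeas.aestronglyMeasurable
          (ae_of_all _ fun p => hC (f p.1, f p.2) trivial)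
      rw [← integral_sub h1 h2, ← Real.norm_eq_abs]
      calc ‖∫ p, (c p.1 p.2 - c (f p.1) (f p.2)) ∂m‖
          ≤ (ε / 4) * (m univ).toReal :=
            norm_integral_le_of_norm_le_const (ae_of_all _ hpt)
        _ = ε / 4 := by simp [hm.measure_univ]
    -- discrete representation
    have hdisc : ∀ (m1 m2 : Measure X), IsProbabilityMeasure m1 → IsProbabilityMeasure m2 →
        ∫ p, c (f p.1) (f p.2) ∂(m1.prod m2)
          = ∑ k, ∑ l, ((m1.map g) {k}).toReal * ((m2.map g) {l}).toReal * c (u k) (u l) := by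
      intro m1 m2 hm1 hm2
      have hGg : Measurable (Prod.map g g) := hg.prodMap hg
      haveI : IsProbabilityMeasure (m1.map g) := Measure.isProbabilityMeasure_map hg.aemeasurable
      haveI : IsProbabilityMeasure (m2.map g) := Measure.isProbabilityMeasure_map hg.aemeasurable
      have h3 := integral_map (φ := Prod.map g g) (μ := m1.prod m2)
        hGg.aemeasurable
        ((measurable_of_countable
          (fun q : Fin n × Fin n => c (u q.1) (u q.2))).aestronglyMeasurable)
      have h2 : (m1.prod m2).map (Prod.map g g) = (m1.map g).prod (m2.map g) :=
        (Measure.map_prod_map _ _ hg hg).symm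
      rw [h2] at h3
      have h4 : ∫ q : Fin n × Fin n, c (u q.1) (u q.2) ∂((m1.map g).prod (m2.map g))
          = ∑ k, ∑ l, ((m1.map g) {k}).toReal * ((m2.map g) {l}).toReal * c (u k) (u l) := by
        rw [integral_fintype Integrable.of_finite, Fintype.sum_prod_type]
        refine Finset.sum_congr rfl fun k _ => Finset.sum_congr rfl fun l _ => ?_
        rw [Measure.real, ← Set.singleton_prod_singleton, Measure.prod_prod, ENNReal.toReal_mul, smul_eq_mul]
      rw [← h4, h3]
      rfl
    have hsum1 : ∀ (m : Measure X), IsProbabilityMeasure m →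
        ∑ k, ((m.map g) {k}).toReal = 1 := by
      intro m hm
      haveI : IsProbabilityMeasure (m.map g) := Measure.isProbabilityMeasure_map hg.aemeasurable
      have h := integral_fintype (μ := m.map g) (f := fun _ => (1 : ℝ)) Integrable.of_finite
      simpa [Measure.real] using h.symm
    have hab : ∑ i, (((α.map g) {i}).toReal - ((β.map g) {i}).toReal) = 0 := by
      rw [Finset.sum_sub_distrib, hsum1 α inferInstance, hsum1 β inferInstance]
      ring
    have hq := hc_neg n (by omega) u
      (fun i => ((α.map g) {i}).toReal - ((β.map g) {i}).toReal) hab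
    have hD : ∑ k, ∑ l, ((β.map g) {k}).toReal * ((α.map g) {l}).toReal * c (u k) (u l)
        = ∑ k, ∑ l, ((α.map g) {k}).toReal * ((β.map g) {l}).toReal * c (u k) (u l) := by
      rw [Finset.sum_comm]
      refine Finset.sum_congr rfl fun k _ => Finset.sum_congr rfl fun l _ => ?_
      rw [hc_sym]
      ring
    have hexp : ∑ i, ∑ j, (((α.map g) {i}).toReal - ((β.map g) {i}).toReal)
          * (((α.map g) {j}).toReal - ((β.map g) {j}).toReal) * c (u i) (u j)
        = (∑ k, ∑ l, ((α.map g) {k}).toReal * ((α.map g) {l}).toReal * c (u k) (u l))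
          + (∑ k, ∑ l, ((β.map g) {k}).toReal * ((β.map g) {l}).toReal * c (u k) (u l))
          - 2 * (∑ k, ∑ l, ((α.map g) {k}).toReal * ((β.map g) {l}).toReal * c (u k) (u l)) := by
      have hterm : ∀ i j : Fin n, (((α.map g) {i}).toReal - ((β.map g) {i}).toReal)
            * (((α.map g) {j}).toReal - ((β.map g) {j}).toReal) * c (u i) (u j)
          = ((α.map g) {i}).toReal * ((α.map g) {j}).toReal * c (u i) (u j)
            + ((β.map g) {i}).toReal * ((β.map g) {j}).toReal * c (u i) (u j)
            - (((α.map g) {i}).toReal * ((β.map g) {j}).toReal * c (u i) (u j)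
              + ((β.map g) {i}).toReal * ((α.map g) {j}).toReal * c (u i) (u j)) := by
        intro i j; ring
      simp only [hterm, Finset.sum_sub_distrib, Finset.sum_add_distrib]
      rw [hD]; ring
    rw [hexp] at hq
    have e1 := hint2 (α.prod α) inferInstance
    have e2 := hint2 (β.prod β) inferInstance
    have e3 := hint2 (α.prod β) inferInstance
    rw [hdisc α α inferInstance inferInstance, abs_le] at e1
    rw [hdisc β β inferInstance inferInstance, abs_le] at e2
    rw [hdisc α β inferInstance inferInstance, abs_le] at e3
    linarith [e1.1, e1.2, e2.1, e2.2, e3.1, e3.2, hq]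
  by_contra hlt
  push_neg at hlt
  have h2 := key ((((∫ p, c p.1 p.2 ∂(α.prod α)) + (∫ p, c p.1 p.2 ∂(β.prod β)))
    - 2 * ∫ p, c p.1 p.2 ∂(α.prod β)) / 2) (by linarith)
  linarith

end DlotKey

section DlotAux

open Set

variable {X : Type*} [MetricSpace X] [CompactSpace X] [Nonempty X]
  [MeasurableSpace X] [BorelSpace X]

omit [CompactSpace X] [Nonempty X] [BorelSpace X] in
lemma dlot_aux_fst_marginal (r : ℕ) (lam : Fin r → ℝ≥0) (ms ns : Fin r → Measure X)
    (hns : ∀ i, IsProbabilityMeasure (ns i)) :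
    (∑ i, lam i • (ms i).prod (ns i)).map Prod.fst = ∑ i, lam i • ms i := by
  ext sset hsset
  rw [Measure.map_apply measurable_fst hsset, Measure.finset_sum_apply,
    Measure.finset_sum_apply]
  have hpre : (Prod.fst ⁻¹' sset : Set (X × X)) = sset ×ˢ univ := by
    ext ⟨x, y⟩; simp
  refine Finset.sum_congr rfl fun i _ => ?_
  haveI := hns i
  rw [Measure.smul_apply, Measure.smul_apply, hpre, Measure.prod_prod, measure_univ, mul_one]

omit [CompactSpace X] [Nonempty X] [BorelSpace X] in
lemma dlot_aux_snd_marginal (r : ℕ) (lam : Fin r → ℝ≥0) (ms ns : Fin r → Measure X)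
    (hms : ∀ i, IsProbabilityMeasure (ms i)) (hns : ∀ i, IsProbabilityMeasure (ns i)) :
    (∑ i, lam i • (ms i).prod (ns i)).map Prod.snd = ∑ i, lam i • ns i := by
  ext sset hsset
  rw [Measure.map_apply measurable_snd hsset, Measure.finset_sum_apply,
    Measure.finset_sum_apply]
  have hpre : (Prod.snd ⁻¹' sset : Set (X × X)) = univ ×ˢ sset := by
    ext ⟨x, y⟩; simp
  refine Finset.sum_congr rfl fun i _ => ?_
  haveI := hms i; haveI := hns i
  rw [Measure.smul_apply, Measure.smul_apply, hpre, Measure.prod_prod, measure_univ, one_mul]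

omit [CompactSpace X] [Nonempty X] [BorelSpace X] in
lemma dlot_aux_prob (r : ℕ) (lam : Fin r → ℝ≥0) (hsum : (∑ i, lam i) = 1)
    (ms ns : Fin r → Measure X)
    (hms : ∀ i, IsProbabilityMeasure (ms i)) (hns : ∀ i, IsProbabilityMeasure (ns i)) :
    IsProbabilityMeasure (∑ i, lam i • (ms i).prod (ns i)) := by
  constructor
  rw [Measure.finset_sum_apply]
  have : ∀ i : Fin r, (lam i • (ms i).prod (ns i)) univ = (lam i : ℝ≥0∞) := by
    intro i
    haveI := hms i; haveI := hns i
    rw [Measure.smul_apply, ← Set.univ_prod_univ, Measure.prod_prod, measure_univ,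
      measure_univ, mul_one]
    simp [ENNReal.smul_def]
  rw [Finset.sum_congr rfl fun i _ => this i, ← ENNReal.coe_finset_sum, hsum, ENNReal.coe_one]

lemma dlot_aux_int_sum (c : X → X → ℝ) (hc_cont : Continuous fun p : X × X => c p.1 p.2)
    (r : ℕ) (lam : Fin r → ℝ≥0) (ms ns : Fin r → Measure X)
    (hms : ∀ i, IsProbabilityMeasure (ms i)) (hns : ∀ i, IsProbabilityMeasure (ns i)) :
    ∫ p, c p.1 p.2 ∂(∑ i, lam i • (ms i).prod (ns i))
      = ∑ i, (lam i : ℝ) * ∫ p, c p.1 p.2 ∂((ms i).prod (ns i)) := by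
  rw [integral_finset_sum_measure ?_]
  · refine Finset.sum_congr rfl fun i _ => ?_
    rw [integral_smul_nnreal_measure, NNReal.smul_def, smul_eq_mul]
  · intro i _
    haveI := hms i; haveI := hns i
    exact (cost_integrable c hc_cont _).smul_measure ENNReal.coe_ne_top

lemma dlot_aux_self_mem (c : X → X → ℝ) (r : ℕ) (hr : 1 ≤ r)
    (μ ν : Measure X) [IsProbabilityMeasure μ] [IsProbabilityMeasure ν] :
    (∫ p, c p.1 p.2 ∂(μ.prod ν)) ∈
      {t | ∃ π, IsLowRankCoupling r μ ν π ∧ t = ∫ p, c p.1 p.2 ∂π} := by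
  have hrpos : (0 : ℝ≥0) < (r : ℝ≥0) := by
    exact_mod_cast Nat.pos_of_ne_zero (by omega)
  have hrne : ((r : ℝ≥0)) ≠ 0 := ne_of_gt hrpos
  refine ⟨μ.prod ν, ⟨⟨inferInstance, by simp, by simp⟩,
    fun _ => (r : ℝ≥0)⁻¹, fun _ => μ, fun _ => ν, fun _ => by positivity, ?_,
    fun _ => inferInstance, fun _ => inferInstance, ?_⟩, rfl⟩
  · rw [Finset.sum_const, Finset.card_univ, Fintype.card_fin, nsmul_eq_mul,
      mul_inv_cancel₀ (by exact_mod_cast hrne)]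
  · rw [Finset.sum_const, Finset.card_univ, Fintype.card_fin,
      ← Nat.cast_smul_eq_nsmul ℝ≥0, smul_smul, mul_inv_cancel₀ hrne, one_smul]

lemma dlot_aux_bddBelow (c : X → X → ℝ) (hc_nonneg : ∀ x y, 0 ≤ c x y) (r : ℕ)
    (μ ν : Measure X) :
    BddBelow {t | ∃ π, IsLowRankCoupling r μ ν π ∧ t = ∫ p, c p.1 p.2 ∂π} := by
  refine ⟨0, fun t ht => ?_⟩
  obtain ⟨π, hπ, rfl⟩ := ht
  exact integral_nonneg fun p => hc_nonneg _ _

lemma dlot_aux_pair_le (c : X → X → ℝ) (hc_cont : Continuous fun p : X × X => c p.1 p.2)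
    (hc_nonneg : ∀ x y, 0 ≤ c x y)
    (hc_sym : ∀ x y, c x y = c y x)
    (hc_neg : ∀ (n : ℕ), 2 ≤ n → ∀ (x : Fin n → X) (α : Fin n → ℝ), (∑ i, α i) = 0 →
      ∑ i, ∑ j, α i * α j * c (x i) (x j) ≤ 0)
    (r : ℕ) (μ ν : Measure X) [IsProbabilityMeasure μ] [IsProbabilityMeasure ν]
    (π : Measure (X × X)) (hπ : IsLowRankCoupling r μ ν π) :
    LOT r c μ μ + LOT r c ν ν ≤ 2 * ∫ p, c p.1 p.2 ∂π := by
  obtain ⟨⟨hπp, hπ1, hπ2⟩, lam, μs, νs, hpos, hsum, hμs, hνs, hπeq⟩ := hπ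
  have hμeq : μ = ∑ i, lam i • μs i := by
    rw [← hπ1, hπeq, dlot_aux_fst_marginal r lam μs νs hνs]
  have hνeq : ν = ∑ i, lam i • νs i := by
    rw [← hπ2, hπeq, dlot_aux_snd_marginal r lam μs νs hμs hνs]
  have hlotμ : LOT r c μ μ ≤ ∑ i, (lam i : ℝ) * ∫ p, c p.1 p.2 ∂((μs i).prod (μs i)) := by
    have hmem : (∫ p, c p.1 p.2 ∂(∑ i, lam i • (μs i).prod (μs i))) ∈
        {t | ∃ π', IsLowRankCoupling r μ μ π' ∧ t = ∫ p, c p.1 p.2 ∂π'} := by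
      refine ⟨_, ⟨⟨dlot_aux_prob r lam hsum μs μs hμs hμs, ?_, ?_⟩,
        lam, μs, μs, hpos, hsum, hμs, hμs, rfl⟩, rfl⟩
      · rw [dlot_aux_fst_marginal r lam μs μs hμs, ← hμeq]
      · rw [dlot_aux_snd_marginal r lam μs μs hμs hμs, ← hμeq]
    have := csInf_le (dlot_aux_bddBelow c hc_nonneg r μ μ) hmem
    rw [dlot_aux_int_sum c hc_cont r lam μs μs hμs hμs] at this
    exact this
  have hlotν : LOT r c ν ν ≤ ∑ i, (lam i : ℝ) * ∫ p, c p.1 p.2 ∂((νs i).prod (νs i)) := by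
    have hmem : (∫ p, c p.1 p.2 ∂(∑ i, lam i • (νs i).prod (νs i))) ∈
        {t | ∃ π', IsLowRankCoupling r ν ν π' ∧ t = ∫ p, c p.1 p.2 ∂π'} := by
      refine ⟨_, ⟨⟨dlot_aux_prob r lam hsum νs νs hνs hνs, ?_, ?_⟩,
        lam, νs, νs, hpos, hsum, hνs, hνs, rfl⟩, rfl⟩
      · rw [dlot_aux_fst_marginal r lam νs νs hνs, ← hνeq]
      · rw [dlot_aux_snd_marginal r lam νs νs hνs hνs, ← hνeq]
    have := csInf_le (dlot_aux_bddBelow c hc_nonneg r ν ν) hmem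
    rw [dlot_aux_int_sum c hc_cont r lam νs νs hνs hνs] at this
    exact this
  have hkey : ∀ i : Fin r,
      (∫ p, c p.1 p.2 ∂((μs i).prod (μs i))) + (∫ p, c p.1 p.2 ∂((νs i).prod (νs i)))
        ≤ 2 * ∫ p, c p.1 p.2 ∂((μs i).prod (νs i)) := by
    intro i
    haveI := hμs i; haveI := hνs i
    exact negtype_int c hc_cont hc_sym hc_neg (μs i) (νs i)
  have hπint : ∫ p, c p.1 p.2 ∂π
      = ∑ i, (lam i : ℝ) * ∫ p, c p.1 p.2 ∂((μs i).prod (νs i)) := by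
    rw [hπeq, dlot_aux_int_sum c hc_cont r lam μs νs hμs hνs]
  calc LOT r c μ μ + LOT r c ν ν
      ≤ (∑ i, (lam i : ℝ) * ∫ p, c p.1 p.2 ∂((μs i).prod (μs i)))
        + ∑ i, (lam i : ℝ) * ∫ p, c p.1 p.2 ∂((νs i).prod (νs i)) := add_le_add hlotμ hlotν
    _ = ∑ i, ((lam i : ℝ) * (∫ p, c p.1 p.2 ∂((μs i).prod (μs i)))
        + (lam i : ℝ) * ∫ p, c p.1 p.2 ∂((νs i).prod (νs i))) := Finset.sum_add_distrib.symm
    _ ≤ ∑ i, (lam i : ℝ) * (2 * ∫ p, c p.1 p.2 ∂((μs i).prod (νs i))) := by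
        refine Finset.sum_le_sum fun i _ => ?_
        rw [← mul_add]
        exact mul_le_mul_of_nonneg_left (hkey i) (lam i).coe_nonneg
    _ = 2 * ∑ i, (lam i : ℝ) * ∫ p, c p.1 p.2 ∂((μs i).prod (νs i)) := by
        rw [Finset.mul_sum]
        exact Finset.sum_congr rfl fun i _ => by ring
    _ = 2 * ∫ p, c p.1 p.2 ∂π := by rw [hπint]

end DlotAux

/-- If `c` is a continuous semimetric of negative type then
`DLOT_{r,c}(μ,ν) ≥ 0` for all probability measures `μ, ν`. -/
theorem dlot_nonneg {X : Type*}
    [MetricSpace X] [CompactSpace X] [Nonempty X] [MeasurableSpace X] [BorelSpace X]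
    (c : X → X → ℝ) (hc_cont : Continuous fun p : X × X => c p.1 p.2)
    (hc_nonneg : ∀ x y, 0 ≤ c x y)
    (hc_neg : IsSemimetricNegType c)
    (r : ℕ) (hr : 1 ≤ r)
    (μ ν : Measure X) [IsProbabilityMeasure μ] [IsProbabilityMeasure ν] :
    0 ≤ DLOT r c μ ν := by
  obtain ⟨hc_sym, -, hc_neg'⟩ := hc_neg
  have hmain : ∀ t ∈ {t | ∃ π, IsLowRankCoupling r μ ν π ∧ t = ∫ p, c p.1 p.2 ∂π},
      LOT r c μ μ + LOT r c ν ν ≤ 2 * t := by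
    rintro t ⟨π, hπ, rfl⟩
    exact dlot_aux_pair_le c hc_cont hc_nonneg hc_sym hc_neg' r μ ν π hπ
  have hne : {t | ∃ π, IsLowRankCoupling r μ ν π ∧ t = ∫ p, c p.1 p.2 ∂π}.Nonempty :=
    ⟨_, dlot_aux_self_mem c r hr μ ν⟩
  have hle : (LOT r c μ μ + LOT r c ν ν) / 2 ≤ LOT r c μ ν :=
    le_csInf hne fun t ht => by linarith [hmain t ht]
  unfold DLOT
  linarith

end
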